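/- Let K be a field, G = SL₂(K), and V a G-module with no 2-torsion (2v = 0 implies v = 0) on which the central involution i = −I acts trivially. Suppose V = L ⊕ C ⊕ w·L is an internal direct sum of subgroups such that: u fixes L pointwise; w·C = C; [u, c'] ∈ L for all c' ∈ C; and [u, v] ∈ L ⊕ C for all v ∈ V. For a ∈ L write u·(w·a) = w·a + c(a) + ℓ(a) with c(a) ∈ C and ℓ(a) ∈ L (this decomposition exists and is unique, and c and ℓ are additive). Then for all a ∈ L: ℓ(a) = a; w·c(a) = −c(a); c(a) = 0 implies a = 0 (c is injective); and [u, c(a)] = 2a. -/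

import Mathlib

/-- The unipotent element `u_λ = [[1, λ], [0, 1]]` of `SL₂(K)`. -/
def uu (K : Type*) [Field K] (l : K) : Matrix.SpecialLinearGroup (Fin 2) K :=
  ⟨!![1, l; 0, 1], by simp [Matrix.det_fin_two_of]⟩

/-- The Weyl element `w = [[0, 1], [-1, 0]]` of `SL₂(K)`. -/
def ww (K : Type*) [Field K] : Matrix.SpecialLinearGroup (Fin 2) K :=
  ⟨!![0, 1; -1, 0], by simp [Matrix.det_fin_two_of]⟩

/-- The central involution `i = -I` of `SL₂(K)`. -/
def ii (K : Type*) [Field K] : Matrix.SpecialLinearGroup (Fin 2) K :=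
  ⟨!![-1, 0; 0, -1], by simp [Matrix.det_fin_two_of]⟩

/-- Let `V` be a `G = SL₂(K)`-module with no `2`-torsion on which
the central involution `i = -I` acts trivially, and suppose `V = L ⊕ C ⊕ w·L` is an
internal direct sum of subgroups with: `u = u₁` fixing `L` pointwise, `w·C = C`,
`[u, C] ⊆ L` and `[u, V] ⊆ L ⊕ C`.  Writing `u • (w • a) = w • a + c a + ℓ a`
(`c a ∈ C`, `ℓ a ∈ L`) for `a ∈ L` — this decomposition exists, is unique, and `c`,
`ℓ` are additive — one has `ℓ a = a`, `w • c a = - c a`, `c` is injective, and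
`[u, c a] = 2 a` for all `a ∈ L`. -/
theorem stmt14 {K : Type*} [Field K] {V : Type*} [AddCommGroup V]
    [DistribMulAction (Matrix.SpecialLinearGroup (Fin 2) K) V]
    (htf : ∀ v : V, 2 • v = 0 → v = 0)
    (hi : ∀ v : V, ii K • v = v)
    (L C : AddSubgroup V)
    (hdec : ∀ v : V, ∃ a ∈ L, ∃ c ∈ C, ∃ b ∈ L, v = a + c + ww K • b)
    (huniq : ∀ a c b : V, a ∈ L → c ∈ C → b ∈ L →
      a + c + ww K • b = 0 → a = 0 ∧ c = 0 ∧ b = 0)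
    (hufix : ∀ a ∈ L, uu K 1 • a = a)
    (hwC : ∀ v : V, ww K • v ∈ C ↔ v ∈ C)
    (huC : ∀ c' ∈ C, uu K 1 • c' - c' ∈ L)
    (huV : ∀ v : V, ∃ a ∈ L, ∃ c' ∈ C, uu K 1 • v - v = a + c') :
    ∃ c ℓ : V → V,
      (∀ a ∈ L, c a ∈ C ∧ ℓ a ∈ L ∧
        uu K 1 • (ww K • a) = ww K • a + c a + ℓ a) ∧
      (∀ a ∈ L, ∀ c' ℓ' : V, c' ∈ C → ℓ' ∈ L →
        uu K 1 • (ww K • a) = ww K • a + c' + ℓ' → c' = c a ∧ ℓ' = ℓ a) ∧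
      (∀ a b : V, a ∈ L → b ∈ L →
        c (a + b) = c a + c b ∧ ℓ (a + b) = ℓ a + ℓ b) ∧
      (∀ a ∈ L, ℓ a = a) ∧
      (∀ a ∈ L, ww K • c a = - c a) ∧
      (∀ a ∈ L, c a = 0 → a = 0) ∧
      (∀ a ∈ L, uu K 1 • c a - c a = 2 • a) := by
  classical
  -- matrix identities
  have hbraid : uu K 1 * ww K * uu K 1 = ww K * uu K (-1) * ww K := by
    ext i j
    simp only [Matrix.SpecialLinearGroup.coe_mul]
    fin_cases i <;> fin_cases j <;>
      simp [uu, ww, Matrix.mul_apply, Fin.sum_univ_succ]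
  have hww : ww K * ww K = ii K := by
    ext i j
    simp only [Matrix.SpecialLinearGroup.coe_mul]
    fin_cases i <;> fin_cases j <;>
      simp [ww, ii, Matrix.mul_apply, Fin.sum_univ_succ]
  have hinvu : uu K (-1) * uu K 1 = 1 := by
    ext i j
    simp only [Matrix.SpecialLinearGroup.coe_mul, Matrix.SpecialLinearGroup.coe_one]
    fin_cases i <;> fin_cases j <;>
      simp [uu, Matrix.mul_apply, Fin.sum_univ_succ, Matrix.one_apply]
  -- u⁻¹ undoes u and fixes L
  have hcancel : ∀ v : V, uu K (-1) • uu K 1 • v = v := fun v => by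
    rw [← mul_smul, hinvu, one_smul]
  have hinvfix : ∀ a ∈ L, uu K (-1) • a = a := fun a ha => by
    conv_lhs => rw [← hufix a ha]
    exact hcancel a
  -- comparison of two decompositions
  have hcmp : ∀ l1 c1 b1 l2 c2 b2 : V, l1 ∈ L → c1 ∈ C → b1 ∈ L →
      l2 ∈ L → c2 ∈ C → b2 ∈ L →
      l1 + c1 + ww K • b1 = l2 + c2 + ww K • b2 → l1 = l2 ∧ c1 = c2 ∧ b1 = b2 := by
    intro l1 c1 b1 l2 c2 b2 h1 h2 h3 h4 h5 h6 heq
    have h0 : (l1 - l2) + (c1 - c2) + ww K • (b1 - b2) = 0 := by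
      rw [smul_sub]; rw [← sub_eq_zero] at heq; rw [← heq]; abel
    obtain ⟨e1, e2, e3⟩ := huniq _ _ _ (L.sub_mem h1 h4) (C.sub_mem h2 h5)
      (L.sub_mem h3 h6) h0
    exact ⟨sub_eq_zero.mp e1, sub_eq_zero.mp e2, sub_eq_zero.mp e3⟩
  choose f hfL g hgC heq using huV
  set cf : V → V := fun a => g (ww K • a) with hcf
  set lf : V → V := fun a => f (ww K • a) with hlf
  have hE : ∀ a : V, uu K 1 • (ww K • a) = ww K • a + cf a + lf a := by
    intro a
    have := heq (ww K • a)
    rw [sub_eq_iff_eq_add] at this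
    rw [this]; abel
  -- the master computation
  have key : ∀ a ∈ L, lf a = a ∧ ww K • cf a = - cf a ∧
      uu K 1 • cf a - cf a = 2 • a := by
    intro a ha
    have hcC : cf a ∈ C := hgC _
    have hlL : lf a ∈ L := hfL _
    set c := cf a with hc
    set l := lf a with hl
    set lc := uu K 1 • c - c with hlcdef
    have hlcL : lc ∈ L := huC c hcC
    have hucc : uu K 1 • c = c + lc := by rw [hlcdef]; abel
    have huinvc : uu K (-1) • c = c - lc := by
      have h1 : uu K (-1) • (uu K 1 • c) = uu K (-1) • (c + lc) := by rw [hucc]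
      rw [hcancel, smul_add, hinvfix lc hlcL] at h1
      rw [eq_sub_iff_add_eq, ← h1]
    have huinvw : uu K (-1) • (ww K • a) = ww K • a - c + lc - l := by
      have h1 : uu K (-1) • (uu K 1 • (ww K • a)) =
          uu K (-1) • (ww K • a + c + l) := by rw [hE a]
      rw [hcancel, smul_add, smul_add, huinvc, hinvfix l hlL] at h1
      -- h1 : ww K • a = uu K (-1) • ww K • a + (c - lc) + l
      rw [← sub_eq_zero] at h1 ⊢
      rw [← neg_eq_zero] at h1
      rw [← h1]; abel
    have main : a + (-(ww K • c)) + ww K • (lc - l) = l + c + ww K • a := by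
      have lhs1 : ww K • (uu K (-1) • (ww K • a)) =
          a + (-(ww K • c)) + ww K • (lc - l) := by
        rw [huinvw]
        simp only [smul_sub, smul_add, ← mul_smul, hww, hi]
        abel
      have lhs2 : ww K • (uu K (-1) • (ww K • a)) = ww K • a + c + l := by
        rw [← mul_smul, ← mul_smul, ← hbraid, mul_smul, mul_smul, hufix a ha, hE a]
      rw [lhs1] at lhs2
      rw [lhs2]; abel
    obtain ⟨e1, e2, e3⟩ := hcmp a (-(ww K • c)) (lc - l) l c a ha
      (C.neg_mem ((hwC c).mpr hcC)) (L.sub_mem hlcL hlL) hlL hcC ha main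
    refine ⟨e1.symm, neg_eq_iff_eq_neg.mp e2, ?_⟩
    show uu K 1 • c - c = 2 • a
    rw [hlcdef, sub_sub, sub_eq_iff_eq_add] at e3
    -- e3 : uu K 1 • c = a + (c + l)
    rw [e3, e1, two_smul]
    abel
  refine ⟨cf, lf, fun a ha => ⟨hgC _, hfL _, hE a⟩, ?_, ?_, fun a ha => (key a ha).1,
    fun a ha => (key a ha).2.1, ?_, fun a ha => (key a ha).2.2⟩
  · intro a ha c' l' hc' hl' heq'
    have h1 := heq'.symm.trans (hE a)
    -- h1 : ww K • a + c' + l' = ww K • a + cf a + lf a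
    have h2 : l' + c' + ww K • a = lf a + cf a + ww K • a := by
      rw [← sub_eq_zero] at h1 ⊢
      rw [← h1]; abel
    have := hcmp l' c' a (lf a) (cf a) a hl' hc' ha (hfL _) (hgC _) ha h2
    exact ⟨this.2.1, this.1⟩
  · intro a b ha hb
    have h1 : uu K 1 • (ww K • (a + b)) =
        uu K 1 • (ww K • a) + uu K 1 • (ww K • b) := by
      rw [smul_add, smul_add]
    rw [hE a, hE b, hE (a + b)] at h1
    rw [smul_add] at h1
    have h2 : (lf (a+b)) + (cf (a+b)) + ww K • (a+b) =
        (lf a + lf b) + (cf a + cf b) + ww K • (a+b) := by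
      rw [smul_add]
      rw [← sub_eq_zero] at h1 ⊢
      rw [← h1]; abel
    have := hcmp _ _ _ _ _ _ (hfL _) (hgC _) (L.add_mem ha hb)
      (L.add_mem (hfL _) (hfL _)) (C.add_mem (hgC _) (hgC _)) (L.add_mem ha hb) h2
    exact ⟨this.2.1, this.1⟩
  · intro a ha h0
    have h1 := (key a ha).2.2
    rw [h0, smul_zero, sub_zero] at h1
    exact htf a h1.symm
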